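/- arXiv:1108.5044 — 3 statements merged into one kernel-verified Lean document; each statement's English description precedes it below -/
import Mathlib

section
/- For positive integers n and k with 1 ≤ k ≤ n, the identity C(n+1, k-j) · j = k · C(n, k-j) − (n-k+1) · C(n, k-j-1) holds for all integers j with 0 ≤ j ≤ k. -/
/-- Binomial coefficient with integer lower index, with the convention that it
vanishes when the lower index is negative. -/
def intChoose (a : ℕ) (b : ℤ) : ℤ := if 0 ≤ b then (a.choose b.toNat : ℤ) else 0

/-- For `1 ≤ k ≤ n` and `0 ≤ j ≤ k`,
`C(n+1, k-j)·j = k·C(n, k-j) − (n-k+1)·C(n, k-j-1)`. -/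
theorem branching_binomial_identity (n k : ℕ) (hk : 1 ≤ k) (hkn : k ≤ n)
    (j : ℤ) (hj0 : 0 ≤ j) (hjk : j ≤ (k : ℤ)) :
    intChoose (n + 1) ((k : ℤ) - j) * j
      = (k : ℤ) * intChoose n ((k : ℤ) - j)
        - ((n : ℤ) - k + 1) * intChoose n ((k : ℤ) - j - 1) := by
  obtain ⟨m, hm, hmk⟩ : ∃ m : ℕ, (k : ℤ) - j = m ∧ m ≤ k := by
    refine ⟨((k:ℤ) - j).toNat, (Int.toNat_of_nonneg (by omega)).symm, ?_⟩
    omega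
  rw [hm]
  rcases Nat.eq_zero_or_pos m with rfl | hm1
  · simp [intChoose]
    omega
  · obtain ⟨s, rfl⟩ := Nat.exists_eq_add_of_lt hm1
    have h0 : (0:ℤ) + s = s := by ring
    have key : n.choose (s+1) * (s+1) = n.choose s * (n - s) := Nat.choose_succ_right_eq n s
    have hsn : s + 1 ≤ n := by omega
    have key' : ((n.choose (s+1) : ℤ)) * (s+1) = (n.choose s : ℤ) * ((n:ℤ) - s) := by
      have := congrArg (Nat.cast : ℕ → ℤ) key
      push_cast [Nat.succ_eq_add_one, Nat.cast_sub (by omega : s ≤ n)] at this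
      linarith [this]
    have hpasc : (n+1).choose (s+1) = n.choose (s+1) + n.choose s := by
      rw [Nat.choose_succ_succ', Nat.add_comm]
    have hj : j = (k : ℤ) - (s+1) := by omega
    simp only [intChoose, if_pos (by positivity : (0:ℤ) ≤ ((0+s+1:ℕ):ℤ)),
      show ((0+s+1:ℕ):ℤ) - 1 = (s:ℤ) by push_cast; ring]
    rw [if_pos (by positivity : (0:ℤ) ≤ (s:ℤ))]
    have h1 : ((0+s+1:ℕ):ℤ).toNat = s+1 := by omega
    have h2 : ((s:ℕ):ℤ).toNat = s := by omega
    rw [h1, h2, hj, hpasc]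
    push_cast
    linarith [key']
end

section
/- Define the block functions τ_k^n on the symmetric group S_n by τ_k^n(g) = ∑_{j=0}^{k-1} (-1)^j · C(n+1, j) · (k-j)^{ℓ(g)}, where ℓ(g) is the number of cycles of g. Then for all 1 ≤ k ≤ n and all g ∈ S_n, k^{ℓ(g)} = ∑_{j=0}^{k-1} C(n+j, j) · τ_{k-j}^n(g). -/
/-- The number of cycles of a permutation of `Fin n` (fixed points counted as cycles). -/
noncomputable def cycleCount {n : ℕ} (g : Equiv.Perm (Fin n)) : ℕ :=
  Nat.card (MulAction.orbitRel.Quotient (Subgroup.zpowers g) (Fin n))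

/-- The block function `τ_k^n(g) = ∑_{j=0}^{k-1} (-1)^j C(n+1, j) (k-j)^{ℓ(g)}`. -/
noncomputable def tau (n k : ℕ) {m : ℕ} (g : Equiv.Perm (Fin m)) : ℤ :=
  ∑ j ∈ Finset.range k, (-1 : ℤ) ^ j * ((n + 1).choose j) * ((k - j : ℕ) : ℤ) ^ cycleCount g

open Finset PowerSeries

set_option maxRecDepth 4000

lemma coeff_one_sub_pow (d i : ℕ) :
    PowerSeries.coeff (R := ℤ) i ((1 - PowerSeries.X) ^ d) = (-1) ^ i * d.choose i := by
  have h : ((1 : ℤ⟦X⟧) - PowerSeries.X) ^ d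
      = ∑ m ∈ range (d + 1), PowerSeries.C (R := ℤ) ((-1) ^ m * d.choose m) * PowerSeries.X ^ m := by
    have := add_pow (-PowerSeries.X : ℤ⟦X⟧) 1 d
    rw [show (-PowerSeries.X + 1 : ℤ⟦X⟧) = 1 - PowerSeries.X by ring] at this
    rw [this]
    refine Finset.sum_congr rfl fun m hm => ?_
    rw [neg_pow]
    simp
    ring
  rw [h, map_sum]
  simp only [PowerSeries.coeff_C_mul, PowerSeries.coeff_X_pow]
  rw [Finset.sum_eq_single i]
  · simp
  · intro b _ hb; simp [hb.symm]
  · intro hi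
    simp only [Finset.mem_range, not_lt] at hi
    simp [Nat.choose_eq_zero_of_lt (by omega : d < i)]

lemma key (n s : ℕ) :
    ∑ i ∈ Finset.range (s + 1),
        (-1 : ℤ) ^ i * ((n + 1).choose i) * ((n + (s - i)).choose (s - i))
      = if s = 0 then 1 else 0 := by
  have h1 : ((1 - PowerSeries.X) ^ (n + 1) * (PowerSeries.invOneSubPow ℤ (n + 1)).val
      : ℤ⟦X⟧) = 1 := by
    rw [← PowerSeries.invOneSubPow_inv_eq_one_sub_pow]
    exact (PowerSeries.invOneSubPow ℤ (n + 1)).inv_val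
  have h2 := congrArg (PowerSeries.coeff (R := ℤ) s) h1
  rw [PowerSeries.coeff_mul, PowerSeries.coeff_one,
    Finset.Nat.sum_antidiagonal_eq_sum_range_succ_mk] at h2
  rw [← h2]
  refine Finset.sum_congr rfl fun i hi => ?_
  rw [coeff_one_sub_pow, PowerSeries.invOneSubPow_val_succ_eq_mk_add_choose,
    PowerSeries.coeff_mk]
  have h3 : (n + (s - i)).choose (s - i) = (n + (s - i)).choose n := by
    rw [← Nat.choose_symm (Nat.le_add_right n (s - i))]; congr 1; omega
  rw [h3]

lemma sum_tri {M : Type*} [AddCommMonoid M] (k : ℕ) (F : ℕ → ℕ → M) :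
    ∑ j ∈ range k, ∑ i ∈ range (k - j), F j i
      = ∑ s ∈ range k, ∑ i ∈ range (s + 1), F (s - i) i := by
  rw [Finset.sum_sigma', Finset.sum_sigma']
  refine Finset.sum_nbij' (fun p => ⟨p.1 + p.2, p.2⟩) (fun p => ⟨p.1 - p.2, p.2⟩) ?_ ?_ ?_ ?_ ?_
  · rintro ⟨j, i⟩ hp
    simp only [Finset.mem_sigma, Finset.mem_range] at hp ⊢
    omega
  · rintro ⟨s, i⟩ hp
    simp only [Finset.mem_sigma, Finset.mem_range] at hp ⊢
    omega
  · rintro ⟨j, i⟩ hp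
    simp
  · rintro ⟨s, i⟩ hp
    simp only [Finset.mem_sigma, Finset.mem_range] at hp
    simp only [Sigma.mk.inj_iff, heq_eq_eq, and_true]
    omega
  · rintro ⟨j, i⟩ hp
    simp

private theorem sigma_eq_sum_tau' (n k : ℕ) (hk : 1 ≤ k) (hkn : k ≤ n) (L : ℕ) :
    (k : ℤ) ^ L
      = ∑ j ∈ Finset.range k, ((n + j).choose j : ℤ) *
          ∑ i ∈ Finset.range (k - j), (-1 : ℤ) ^ i * ((n + 1).choose i) * ((k - j - i : ℕ) : ℤ) ^ L := by
  simp_rw [Finset.mul_sum]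
  rw [sum_tri k (fun j i => ((n + j).choose j : ℤ) * ((-1 : ℤ) ^ i * ((n + 1).choose i) * ((k - j - i : ℕ) : ℤ) ^ L))]
  have hin : ∀ s ∈ range k, ∑ i ∈ range (s + 1),
      ((n + (s - i)).choose (s - i) : ℤ) * ((-1 : ℤ) ^ i * ((n + 1).choose i) * ((k - (s - i) - i : ℕ) : ℤ) ^ L)
      = (if s = 0 then 1 else 0) * ((k - s : ℕ) : ℤ) ^ L := by
    intro s hs
    rw [← key n s, Finset.sum_mul]
    refine Finset.sum_congr rfl fun i hi => ?_
    simp only [Finset.mem_range] at hi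
    have : k - (s - i) - i = k - s := by omega
    rw [this]
    ring
  rw [Finset.sum_congr rfl hin]
  rw [Finset.sum_eq_single 0]
  · simp
  · intro b _ hb; simp [hb]
  · intro h; simp at h; omega

/-- Inversion formula: `k^{ℓ(g)} = ∑_{j=0}^{k-1} C(n+j, j) τ_{k-j}^n(g)`. -/
theorem sigma_eq_sum_tau (n k : ℕ) (hk : 1 ≤ k) (hkn : k ≤ n) (g : Equiv.Perm (Fin n)) :
    (k : ℤ) ^ cycleCount g
      = ∑ j ∈ Finset.range k, ((n + j).choose j : ℤ) * tau n (k - j) g := by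
  simp only [tau]
  exact sigma_eq_sum_tau' n k hk hkn (cycleCount g)
end

section
/- The Worpitzky-type identity holds: for all positive integers n and k, k^n = ∑_{j=0}^{k-1} C(n+j, n) · A(n, k−j), where A(n,i) is the Eulerian number counting permutations of {1,...,n} with i−1 descents. -/
/-- The number of descents of a permutation of `Fin n` in one-line notation:
positions `j` (0-indexed, `j + 1 < n`) with `g(j+1) < g(j)`. -/
noncomputable def permDescents (n : ℕ) (g : Equiv.Perm (Fin n)) : ℕ :=
  Nat.card {j : ℕ // ∃ h : j + 1 < n, g ⟨j + 1, h⟩ < g ⟨j, Nat.lt_of_succ_lt h⟩}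

/-- The Eulerian number `A(n,k)`: the number of permutations of `{1, …, n}` with
exactly `k − 1` descents. -/
noncomputable def eulerian (n k : ℕ) : ℕ :=
  Nat.card {g : Equiv.Perm (Fin n) // permDescents n g = k - 1}



open Finset

namespace WorpitzkyAux

variable {n : ℕ}

open scoped Classical in
/-- The descent set of a permutation, as a finset of naturals. -/
noncomputable def dSet (n : ℕ) (σ : Equiv.Perm (Fin n)) : Finset ℕ :=
  (Finset.range n).filter fun j =>
    ∃ h : j + 1 < n, σ ⟨j + 1, h⟩ < σ ⟨j, Nat.lt_of_succ_lt h⟩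

lemma mem_dSet {σ : Equiv.Perm (Fin n)} {j : ℕ} :
    j ∈ dSet n σ ↔ ∃ h : j + 1 < n, σ ⟨j + 1, h⟩ < σ ⟨j, Nat.lt_of_succ_lt h⟩ := by
  classical
  simp only [dSet, Finset.mem_filter, Finset.mem_range]
  exact ⟨fun h => h.2, fun h => ⟨by obtain ⟨h', _⟩ := h; omega, h⟩⟩

lemma dSet_subset (σ : Equiv.Perm (Fin n)) : dSet n σ ⊆ Finset.range (n - 1) := by
  intro j hj
  rw [mem_dSet] at hj
  obtain ⟨h, _⟩ := hj
  exact Finset.mem_range.2 (by omega)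

lemma card_dSet_le (σ : Equiv.Perm (Fin n)) : (dSet n σ).card ≤ n - 1 := by
  simpa using Finset.card_le_card (dSet_subset σ)

lemma permDescents_eq (σ : Equiv.Perm (Fin n)) :
    permDescents n σ = (dSet n σ).card := by
  have hs : {j : ℕ | ∃ h : j + 1 < n, σ ⟨j + 1, h⟩ < σ ⟨j, Nat.lt_of_succ_lt h⟩}
      = ↑(dSet n σ) := by
    ext j; simp [mem_dSet]
  have : permDescents n σ =
      Nat.card ({j : ℕ | ∃ h : j + 1 < n, σ ⟨j + 1, h⟩ < σ ⟨j, Nat.lt_of_succ_lt h⟩} : Set ℕ) := rfl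
  rw [this, hs, Nat.card_coe_set_eq, Set.ncard_coe_finset]


-- helpers about adjacent conditions on Fin tuples
section adj

variable {n m : ℕ}

lemma mono_of_adj {g : Fin n → Fin m}
    (h : ∀ (j : ℕ) (hj : j + 1 < n), g ⟨j, Nat.lt_of_succ_lt hj⟩ ≤ g ⟨j + 1, hj⟩) :
    Monotone g := by
  have key : ∀ (t i : ℕ) (hi : i + t < n), g ⟨i, by omega⟩ ≤ g ⟨i + t, hi⟩ := by
    intro t
    induction t with
    | zero => intro i hi; exact le_rfl
    | succ t ih =>
      intro i hi
      have h1 : i + t < n := by omega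
      exact le_trans (ih i h1) (h (i + t) (by omega))
  intro a b hab
  obtain ⟨t, ht⟩ : ∃ t, (b : ℕ) = (a : ℕ) + t := ⟨(b : ℕ) - a, by omega⟩
  have hb : b = ⟨(a : ℕ) + t, by omega⟩ := Fin.ext ht
  rw [hb]
  exact key t a _

lemma strictMono_of_adj {g : Fin n → Fin m}
    (h : ∀ (j : ℕ) (hj : j + 1 < n), g ⟨j, Nat.lt_of_succ_lt hj⟩ < g ⟨j + 1, hj⟩) :
    StrictMono g := by
  have key : ∀ (t i : ℕ) (hi : i + t + 1 < n), g ⟨i, by omega⟩ < g ⟨i + t + 1, hi⟩ := by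
    intro t
    induction t with
    | zero => intro i hi; exact h i hi
    | succ t ih =>
      intro i hi
      have h1 : i + t + 1 < n := by omega
      exact lt_trans (ih i h1) (h (i + t + 1) (by omega))
  intro a b hab
  obtain ⟨t, ht⟩ : ∃ t, (b : ℕ) = (a : ℕ) + t + 1 := ⟨(b : ℕ) - a - 1, by
    have := (Fin.lt_def).1 hab; omega⟩
  have hb : b = ⟨(a : ℕ) + t + 1, by omega⟩ := Fin.ext ht
  rw [hb]
  exact key t a _

lemma strictMono_gap {G : Fin n → Fin m} (hG : StrictMono G) :
    ∀ (t i : ℕ) (hi : i + t < n), (G ⟨i, by omega⟩ : ℕ) + t ≤ (G ⟨i + t, hi⟩ : ℕ) := by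
  intro t
  induction t with
  | zero => intro i hi; simp
  | succ t ih =>
    intro i hi
    have h1 : i + t < n := by omega
    have h2 : G ⟨i + t, h1⟩ < G ⟨i + (t + 1), hi⟩ := hG (by simp [Fin.lt_def])
    have h3 := ih i h1
    have h4 : ((G ⟨i + t, h1⟩ : Fin m) : ℕ) < ((G ⟨i + (t + 1), hi⟩ : Fin m) : ℕ) := h2
    omega

end adj

section cond

variable {n k : ℕ}

/-- The tie-breaking condition in `Tuple.eq_sort_iff` is, for monotone `g`,
equivalent to strict increase of `g` at descents of `σ`. -/
lemma cond_iff (σ : Equiv.Perm (Fin n)) {g : Fin n → Fin k} (hg : Monotone g) :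
    (∀ i j, i < j → g i = g j → σ i < σ j) ↔
      (∀ (j : ℕ) (hj : j + 1 < n), σ ⟨j + 1, hj⟩ < σ ⟨j, Nat.lt_of_succ_lt hj⟩ →
        g ⟨j, Nat.lt_of_succ_lt hj⟩ < g ⟨j + 1, hj⟩) := by
  constructor
  · intro h j hj hσ
    have hle : g ⟨j, Nat.lt_of_succ_lt hj⟩ ≤ g ⟨j + 1, hj⟩ := hg (by simp [Fin.le_def])
    rcases lt_or_eq_of_le hle with hlt | heq
    · exact hlt
    · exact absurd (h _ _ (by simp [Fin.lt_def]) heq) (asymm hσ)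
  · intro h
    have base : ∀ (i : ℕ) (hi : i + 1 < n),
        g ⟨i, Nat.lt_of_succ_lt hi⟩ = g ⟨i + 1, hi⟩ →
          σ ⟨i, Nat.lt_of_succ_lt hi⟩ < σ ⟨i + 1, hi⟩ := by
      intro i hi heq
      rcases lt_trichotomy (σ ⟨i, Nat.lt_of_succ_lt hi⟩) (σ ⟨i + 1, hi⟩) with h1 | h1 | h1
      · exact h1
      · exact absurd (σ.injective h1) (by simp [Fin.ext_iff])
      · exact absurd heq (ne_of_lt (h i hi h1))
    have key : ∀ (t i : ℕ) (hi : i + t + 1 < n),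
        g ⟨i, by omega⟩ = g ⟨i + t + 1, hi⟩ → σ ⟨i, by omega⟩ < σ ⟨i + t + 1, hi⟩ := by
      intro t
      induction t with
      | zero => intro i hi heq; exact base i hi heq
      | succ t ih =>
        intro i hi heq
        have h1 : i + 1 < n := by omega
        have h2 : i + t + 1 < n := by omega
        have hle1 : g ⟨i, by omega⟩ ≤ g ⟨i + 1, h1⟩ := hg (by simp [Fin.le_def])
        have hle2 : g ⟨i + 1, h1⟩ ≤ g ⟨i + (t + 1) + 1, hi⟩ := hg (by simp only [Fin.le_def]; omega)
        have heq1 : g ⟨i, by omega⟩ = g ⟨i + 1, h1⟩ := le_antisymm hle1 (heq ▸ hle2)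
        have heq2 : g ⟨i + 1, h1⟩ = g ⟨i + (t + 1) + 1, hi⟩ := le_antisymm hle2 (heq ▸ hle1)
        have hstep : σ ⟨i + 1, h1⟩ < σ ⟨(i + 1) + t + 1, by omega⟩ := ih (i + 1) (by omega) (by
          convert heq2 using 3 <;> omega)
        exact lt_trans (base i h1 heq1) (by rw [show (⟨i + (t + 1) + 1, hi⟩ : Fin n) = ⟨(i + 1) + t + 1, by omega⟩ from Fin.mk_eq_mk.2 (by omega)]; exact hstep)
    intro i j hij heq
    obtain ⟨t, ht⟩ : ∃ t, (j : ℕ) = (i : ℕ) + t + 1 := ⟨(j : ℕ) - i - 1, by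
      have := (Fin.lt_def).1 hij; omega⟩
    have hj2 : j = ⟨(i : ℕ) + t + 1, by omega⟩ := Fin.ext ht
    rw [hj2] at heq ⊢
    exact key t i _ heq

/-- First equivalence: fibers of `Tuple.sort` over `σ` correspond to monotone tuples
with the tie-breaking condition. -/
def E1 (σ : Equiv.Perm (Fin n)) :
    {f : Fin n → Fin k // Tuple.sort f = σ} ≃
      {g : Fin n → Fin k // Monotone g ∧ ∀ i j, i < j → g i = g j → σ i < σ j} where
  toFun f := ⟨f.1 ∘ σ, by
    have h := Tuple.eq_sort_iff.mp f.2.symm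
    exact ⟨h.1, h.2⟩⟩
  invFun g := ⟨g.1 ∘ σ.symm, by
    symm
    rw [Tuple.eq_sort_iff]
    have hfs : (g.1 ∘ ⇑σ.symm) ∘ ⇑σ = g.1 := by ext x; simp
    refine ⟨by rw [show (g.1 ∘ ⇑σ.symm) ∘ ⇑σ = g.1 from hfs]; exact g.2.1,
      fun i j hij he => g.2.2 i j hij ?_⟩
    simpa using he⟩
  left_inv f := Subtype.ext (by ext x; simp)
  right_inv g := Subtype.ext (by ext x; simp)

end cond

section count

variable {n m : ℕ}

/-- Strictly monotone tuples in `Fin m` correspond to `n`-element subsets. -/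
def E4 (n m : ℕ) :
    {G : Fin n → Fin m // StrictMono G} ≃ {s : Finset (Fin m) // s.card = n} where
  toFun G := ⟨Finset.univ.image G.1, by
    rw [Finset.card_image_of_injective _ G.2.injective, Finset.card_univ, Fintype.card_fin]⟩
  invFun s := ⟨⇑(s.1.orderEmbOfFin s.2), (s.1.orderEmbOfFin s.2).strictMono⟩
  left_inv G := Subtype.ext
    (Finset.orderEmbOfFin_unique _ (fun x => Finset.mem_image_of_mem _ (Finset.mem_univ x))
      G.2).symm
  right_inv s := Subtype.ext (by
    apply Finset.coe_injective
    rw [Finset.coe_image, Finset.coe_univ, Set.image_univ, Finset.range_orderEmbOfFin])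

lemma card_strictMono (n m : ℕ) :
    Nat.card {G : Fin n → Fin m // StrictMono G} = m.choose n := by
  classical
  rw [Nat.card_congr (E4 n m), Nat.card_eq_fintype_card, Fintype.card_finset_len,
    Fintype.card_fin]

end count

section nds

/-- Number of elements of `range j` not in `D` ("non-descents below `j`"). -/
def ndsF (D : Finset ℕ) (j : ℕ) : ℕ := ((Finset.range j).filter (fun i => i ∉ D)).card

lemma ndsF_le (D : Finset ℕ) (j : ℕ) : ndsF D j ≤ j := by
  simpa [ndsF] using Finset.card_filter_le (Finset.range j) _

lemma ndsF_mono (D : Finset ℕ) {i j : ℕ} (hij : i ≤ j) : ndsF D i ≤ ndsF D j :=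
  Finset.card_le_card (Finset.filter_subset_filter _ (Finset.range_subset_range.2 hij))

lemma ndsF_succ_mem (D : Finset ℕ) {j : ℕ} (h : j ∈ D) : ndsF D (j + 1) = ndsF D j := by
  classical
  simp [ndsF, Finset.range_add_one, Finset.filter_insert, h]

lemma ndsF_succ_not_mem (D : Finset ℕ) {j : ℕ} (h : j ∉ D) :
    ndsF D (j + 1) = ndsF D j + 1 := by
  classical
  rw [ndsF, ndsF, Finset.range_add_one, Finset.filter_insert, if_pos h,
    Finset.card_insert_of_notMem (by simp)]

lemma ndsF_ge (D : Finset ℕ) (j : ℕ) : j ≤ ndsF D j + D.card := by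
  classical
  have h2 : ((Finset.range j).filter (fun i => i ∈ D)).card ≤ D.card :=
    Finset.card_le_card (fun x hx => (Finset.mem_filter.1 hx).2)
  have h3 := Finset.card_filter_add_card_filter_not
    (s := Finset.range j) (p := fun i => i ∈ D)
  simp only [Finset.card_range] at h3
  have : ndsF D j = ((Finset.range j).filter (fun i => ¬ i ∈ D)).card := rfl
  omega

lemma ndsF_top {D : Finset ℕ} {N : ℕ} (hD : D ⊆ Finset.range N) :
    ndsF D N = N - D.card := by
  classical
  have h1 : (Finset.range N).filter (fun i => i ∈ D) = D := by
    rw [Finset.filter_mem_eq_inter, Finset.inter_eq_right.2 hD]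
  have h3 := Finset.card_filter_add_card_filter_not
    (s := Finset.range N) (p := fun i => i ∈ D)
  simp only [Finset.card_range, h1] at h3
  have : ndsF D N = ((Finset.range N).filter (fun i => ¬ i ∈ D)).card := rfl
  omega

end nds

section main

variable {n k : ℕ}

lemma card_cond (hn : 0 < n) (hk : 0 < k) (σ : Equiv.Perm (Fin n)) :
    Nat.card {g : Fin n → Fin k // Monotone g ∧
        ∀ (j : ℕ) (hj : j + 1 < n), σ ⟨j + 1, hj⟩ < σ ⟨j, Nat.lt_of_succ_lt hj⟩ →
          g ⟨j, Nat.lt_of_succ_lt hj⟩ < g ⟨j + 1, hj⟩}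
      = (n + k - 1 - (dSet n σ).card).choose n := by
  classical
  have hdn : (dSet n σ).card ≤ n - 1 := card_dSet_le σ
  have hnM : ∀ (j : ℕ), j < n → (q : ℕ) → q < k →
      q + ndsF (dSet n σ) j < n + k - 1 - (dSet n σ).card := by
    intro j hj q hq
    have h1 : ndsF (dSet n σ) j ≤ ndsF (dSet n σ) (n - 1) :=
      ndsF_mono _ (show j ≤ n - 1 by omega)
    have h2 : ndsF (dSet n σ) (n - 1) = (n - 1) - (dSet n σ).card :=
      ndsF_top (dSet_subset σ)
    omega
  have low : ∀ (G : Fin n → Fin (n + k - 1 - (dSet n σ).card)), StrictMono G →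
      ∀ (j : ℕ) (hj : j < n), ndsF (dSet n σ) j ≤ (G ⟨j, hj⟩ : ℕ) := by
    intro G hG j hj
    have h1 := strictMono_gap hG j 0 (by omega)
    have h2 : (G ⟨0 + j, by omega⟩ : ℕ) = (G ⟨j, hj⟩ : ℕ) :=
      congrArg Fin.val (congrArg G (Fin.mk_eq_mk.2 (by omega)))
    have h3 := ndsF_le (dSet n σ) j
    omega
  have high : ∀ (G : Fin n → Fin (n + k - 1 - (dSet n σ).card)), StrictMono G →
      ∀ (j : ℕ) (hj : j < n),
        (G ⟨j, hj⟩ : ℕ) + ((n - 1) - j) < n + k - 1 - (dSet n σ).card := by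
    intro G hG j hj
    have h1 := strictMono_gap hG ((n - 1) - j) j (by omega)
    have h2 : (G ⟨j + ((n - 1) - j), by omega⟩ : ℕ) = (G ⟨n - 1, by omega⟩ : ℕ) :=
      congrArg Fin.val (congrArg G (Fin.mk_eq_mk.2 (by omega)))
    have h3 := (G ⟨n - 1, by omega⟩).isLt
    omega
  have hinv : ∀ (G : Fin n → Fin (n + k - 1 - (dSet n σ).card)), StrictMono G →
      ∀ (j : ℕ) (hj : j < n), (G ⟨j, hj⟩ : ℕ) - ndsF (dSet n σ) j < k := by
    intro G hG j hj
    have h1 := high G hG j hj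
    have h2 := ndsF_ge (dSet n σ) j
    omega
  have e3 : {g : Fin n → Fin k // Monotone g ∧
        ∀ (j : ℕ) (hj : j + 1 < n), σ ⟨j + 1, hj⟩ < σ ⟨j, Nat.lt_of_succ_lt hj⟩ →
          g ⟨j, Nat.lt_of_succ_lt hj⟩ < g ⟨j + 1, hj⟩}
      ≃ {G : Fin n → Fin (n + k - 1 - (dSet n σ).card) // StrictMono G} := by
    refine ⟨fun g => ⟨fun j => ⟨(g.1 j : ℕ) + ndsF (dSet n σ) (j : ℕ),
        hnM _ j.isLt _ (g.1 j).isLt⟩, ?_⟩,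
      fun G => ⟨fun j => ⟨(G.1 j : ℕ) - ndsF (dSet n σ) (j : ℕ),
        hinv G.1 G.2 j.1 j.2⟩, ?_, ?_⟩, ?_, ?_⟩
    · -- strict mono of forward image
      apply strictMono_of_adj
      intro j hj
      rw [Fin.lt_def]
      simp only [Fin.val_mk]
      by_cases hmem : j ∈ dSet n σ
      · obtain ⟨h', hlt⟩ := mem_dSet.1 hmem
        have h1 : (g.1 ⟨j, Nat.lt_of_succ_lt hj⟩ : ℕ) < g.1 ⟨j + 1, hj⟩ :=
          g.2.2 j hj hlt
        have h2 := ndsF_succ_mem (dSet n σ) hmem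
        omega
      · have h1 : (g.1 ⟨j, Nat.lt_of_succ_lt hj⟩ : ℕ) ≤ g.1 ⟨j + 1, hj⟩ :=
          g.2.1 (by simp only [Fin.le_def]; omega)
        have h2 := ndsF_succ_not_mem (dSet n σ) hmem
        omega
    · -- monotone of inverse image
      apply mono_of_adj
      intro j hj
      rw [Fin.le_def]
      simp only [Fin.val_mk]
      have h1 : (G.1 ⟨j, Nat.lt_of_succ_lt hj⟩ : ℕ) < G.1 ⟨j + 1, hj⟩ :=
        G.2 (by simp only [Fin.lt_def]; omega)
      have h2 := low G.1 G.2 j (Nat.lt_of_succ_lt hj)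
      by_cases hmem : j ∈ dSet n σ
      · have h3 := ndsF_succ_mem (dSet n σ) hmem
        omega
      · have h3 := ndsF_succ_not_mem (dSet n σ) hmem
        omega
    · -- strict at descents of inverse image
      intro j hj hlt
      rw [Fin.lt_def]
      simp only [Fin.val_mk]
      have h1 : (G.1 ⟨j, Nat.lt_of_succ_lt hj⟩ : ℕ) < G.1 ⟨j + 1, hj⟩ :=
        G.2 (by simp only [Fin.lt_def]; omega)
      have h2 := low G.1 G.2 j (Nat.lt_of_succ_lt hj)
      have hmem : j ∈ dSet n σ := mem_dSet.2 ⟨hj, hlt⟩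
      have h3 := ndsF_succ_mem (dSet n σ) hmem
      omega
    · -- left inverse
      intro g
      apply Subtype.ext
      funext j
      apply Fin.ext
      simp only [Fin.val_mk]
      omega
    · -- right inverse
      intro G
      apply Subtype.ext
      funext j
      apply Fin.ext
      simp only [Fin.val_mk]
      have h2 := low G.1 G.2 j.1 j.2
      have h3 : G.1 ⟨j.1, j.2⟩ = G.1 j := congrArg G.1 (Fin.ext rfl)
      have h4 : (G.1 ⟨j.1, j.2⟩ : ℕ) = (G.1 j : ℕ) := congrArg Fin.val h3
      omega
  rw [Nat.card_congr e3, card_strictMono]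

end main

section assemble

variable {n k : ℕ}

lemma card_fiber (hn : 0 < n) (hk : 0 < k) (σ : Equiv.Perm (Fin n)) :
    Nat.card {f : Fin n → Fin k // Tuple.sort f = σ}
      = (n + k - 1 - (dSet n σ).card).choose n := by
  rw [Nat.card_congr (E1 σ),
    Nat.card_congr (Equiv.subtypeEquivRight
      (fun g => and_congr_right fun hg => cond_iff σ hg))]
  exact card_cond hn hk σ

lemma eulerian_eq (n d : ℕ) [DecidableEq (Equiv.Perm (Fin n))] :
    eulerian n (d + 1)
      = (Finset.univ.filter fun σ : Equiv.Perm (Fin n) => (dSet n σ).card = d).card := by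
  classical
  have h : ∀ σ : Equiv.Perm (Fin n), (permDescents n σ = d + 1 - 1) ↔ ((dSet n σ).card = d) := by
    intro σ
    rw [permDescents_eq, Nat.add_sub_cancel]
  rw [eulerian, Nat.card_congr (Equiv.subtypeEquivRight h), Nat.card_eq_fintype_card,
    Fintype.card_subtype]

end assemble

section final

/-- Number of permutations with exactly `d` descents. -/
noncomputable def Ndes (n d : ℕ) : ℕ :=
  Nat.card {σ : Equiv.Perm (Fin n) // (dSet n σ).card = d}

lemma eulerian_succ (n d : ℕ) : eulerian n (d + 1) = Ndes n d := by
  have h : ∀ σ : Equiv.Perm (Fin n), (permDescents n σ = d + 1 - 1) ↔ ((dSet n σ).card = d) := by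
    intro σ
    rw [permDescents_eq, Nat.add_sub_cancel]
  rw [eulerian, Nat.card_congr (Equiv.subtypeEquivRight h), Ndes]

lemma Ndes_eq_zero {n d : ℕ} (hn : 0 < n) (hd : n ≤ d) : Ndes n d = 0 := by
  rw [Ndes, Nat.card_eq_zero]
  left
  rw [isEmpty_subtype]
  intro σ
  have := card_dSet_le σ
  omega

lemma sum_group (n : ℕ) (hn : 0 < n) (f : ℕ → ℕ) :
    ∑ σ : Equiv.Perm (Fin n), f ((dSet n σ).card)
      = ∑ d ∈ Finset.range n, Ndes n d * f d := by
  classical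
  rw [← Finset.sum_fiberwise_of_maps_to' (t := Finset.range n)
    (fun σ _ => Finset.mem_range.2 (by have := card_dSet_le σ; omega)) f]
  refine Finset.sum_congr rfl fun d _ => ?_
  rw [Finset.sum_const, smul_eq_mul]
  congr 1
  rw [Ndes, Nat.card_eq_fintype_card, Fintype.card_subtype]

end final

end WorpitzkyAux

/-- The Worpitzky-type identity: `k^n = ∑_{j=0}^{k-1} C(n+j, n) · A(n, k−j)`. -/
theorem worpitzky (n k : ℕ) (hn : 0 < n) (hk : 0 < k) :
    k ^ n = ∑ j ∈ Finset.range k, (n + j).choose n * eulerian n (k - j) := by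
  classical
  have h1 : k ^ n = ∑ σ : Equiv.Perm (Fin n),
      (n + k - 1 - (WorpitzkyAux.dSet n σ).card).choose n := by
    have c1 : k ^ n = Nat.card (Fin n → Fin k) := by
      simp [Nat.card_eq_fintype_card]
    rw [c1, Nat.card_congr (Equiv.sigmaFiberEquiv
        (fun f : Fin n → Fin k => Tuple.sort f)).symm, Nat.card_eq_fintype_card,
      Fintype.card_sigma]
    refine Finset.sum_congr rfl fun σ _ => ?_
    rw [← Nat.card_eq_fintype_card]
    exact WorpitzkyAux.card_fiber hn hk σ
  have h2 : ∑ σ : Equiv.Perm (Fin n), (n + k - 1 - (WorpitzkyAux.dSet n σ).card).choose n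
      = ∑ d ∈ Finset.range n, WorpitzkyAux.Ndes n d * (n + k - 1 - d).choose n :=
    WorpitzkyAux.sum_group n hn (fun d => (n + k - 1 - d).choose n)
  have h3 : ∑ j ∈ Finset.range k, (n + j).choose n * eulerian n (k - j)
      = ∑ d ∈ Finset.range k, WorpitzkyAux.Ndes n d * (n + k - 1 - d).choose n := by
    rw [← Finset.sum_range_reflect]
    refine Finset.sum_congr rfl fun d hd => ?_
    rw [Finset.mem_range] at hd
    have e1 : k - (k - 1 - d) = d + 1 := by omega
    have e2 : n + (k - 1 - d) = n + k - 1 - d := by omega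
    rw [e1, e2, WorpitzkyAux.eulerian_succ n d, mul_comm]
  have h4 : ∑ d ∈ Finset.range n, WorpitzkyAux.Ndes n d * (n + k - 1 - d).choose n
      = ∑ d ∈ Finset.range (max n k), WorpitzkyAux.Ndes n d * (n + k - 1 - d).choose n := by
    apply Finset.sum_subset (Finset.range_subset_range.2 (le_max_left n k))
    intro d _ hd
    rw [Finset.mem_range, not_lt] at hd
    rw [WorpitzkyAux.Ndes_eq_zero hn hd, zero_mul]
  have h5 : ∑ d ∈ Finset.range k, WorpitzkyAux.Ndes n d * (n + k - 1 - d).choose n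
      = ∑ d ∈ Finset.range (max n k), WorpitzkyAux.Ndes n d * (n + k - 1 - d).choose n := by
    apply Finset.sum_subset (Finset.range_subset_range.2 (le_max_right n k))
    intro d _ hd
    rw [Finset.mem_range, not_lt] at hd
    rw [Nat.choose_eq_zero_of_lt (show n + k - 1 - d < n by omega), mul_zero]
  rw [h1, h2, h3, h4, h5]
end
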